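/- (Robbins–Siegmund) Let (z_t), (δ_t), (γ_t), (ψ_t) be nonnegative stochastic processes adapted to a filtration (F_t), satisfying E[z_{t+1}|F_t] ≤ (1+δ_t)z_t + γ_t − ψ_t almost surely for all t. Then on the event {Σδ_t < ∞ and Σγ_t < ∞}, the limit lim_{t→∞} z_t exists (finite) and Σ_t ψ_t < ∞, almost surely. -/

import Mathlib

open MeasureTheory Filter

theorem stmt10 {Ω : Type*} {m0 : MeasurableSpace Ω} (μ : Measure Ω) [IsProbabilityMeasure μ]
    (ℱ : Filtration ℕ m0)
    (z δ γ ψ : ℕ → Ω → ℝ)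
    (hz : Adapted ℱ z) (hδ : Adapted ℱ δ) (hγ : Adapted ℱ γ) (hψ : Adapted ℱ ψ)
    (hznn : ∀ t ω, 0 ≤ z t ω) (hδnn : ∀ t ω, 0 ≤ δ t ω)
    (hγnn : ∀ t ω, 0 ≤ γ t ω) (hψnn : ∀ t ω, 0 ≤ ψ t ω)
    (hzint : ∀ t, Integrable (z t) μ) (hγint : ∀ t, Integrable (γ t) μ)
    (hψint : ∀ t, Integrable (ψ t) μ)
    (hrec : ∀ t, μ[z (t + 1) | ℱ t] ≤ᵐ[μ]
      fun ω => (1 + δ t ω) * z t ω + γ t ω - ψ t ω) :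
    ∀ᵐ ω ∂μ, (Summable (fun t => δ t ω) ∧ Summable (fun t => γ t ω)) →
      (∃ l : ℝ, Tendsto (fun t => z t ω) atTop (nhds l)) ∧ Summable (fun t => ψ t ω) := by
  classical
  -- the discount factor
  set A : ℕ → Ω → ℝ := fun t ω => ∏ s ∈ Finset.range t, (1 + δ s ω) with hAdef
  have hAsucc : ∀ t ω, A (t + 1) ω = A t ω * (1 + δ t ω) := fun t ω => by
    simp only [hAdef]
    exact Finset.prod_range_succ _ _
  have hA1 : ∀ t ω, 1 ≤ A t ω := by
    intro t ω
    induction t with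
    | zero => simp [hAdef]
    | succ t ih => rw [hAsucc]; nlinarith [hδnn t ω]
  have hApos : ∀ t ω, 0 < A t ω := fun t ω => lt_of_lt_of_le one_pos (hA1 t ω)
  have hAmono : ∀ ω, Monotone fun t => A t ω := by
    intro ω
    refine monotone_nat_of_le_succ fun t => ?_
    rw [hAsucc]
    nlinarith [hApos t ω, hδnn t ω]
  have hASM : ∀ t, StronglyMeasurable[ℱ t] (A (t + 1)) := by
    intro t
    refine Finset.stronglyMeasurable_fun_prod _ fun s hs => ?_
    have hs' : s ≤ t := Nat.lt_succ_iff.mp (Finset.mem_range.mp hs)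
    exact stronglyMeasurable_const.add (((hδ s).mono (ℱ.mono hs') le_rfl).stronglyMeasurable)
  have hASM' : ∀ t, StronglyMeasurable[ℱ t] (A t) := by
    intro t
    cases t with
    | zero =>
      simp only [hAdef, Finset.range_zero, Finset.prod_empty]
      exact stronglyMeasurable_const
    | succ s => exact (hASM s).mono (ℱ.mono (Nat.le_succ s))
  -- the compensated process Y
  set Y : ℕ → Ω → ℝ := fun t ω =>
    z t ω / A t ω + ∑ s ∈ Finset.range t, (ψ s ω - γ s ω) / A (s + 1) ω with hYdef
  have hY0 : ∀ ω, Y 0 ω = z 0 ω := by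
    intro ω; simp [hYdef, hAdef]
  have hYadp : ∀ t, StronglyMeasurable[ℱ t] (Y t) := by
    intro t
    refine (((hz t).div (hASM' t).measurable).stronglyMeasurable).add
      (Finset.stronglyMeasurable_fun_sum _ fun s hs => ?_)
    have hs' : s ≤ t := (Finset.mem_range.mp hs).le
    exact (((((hψ s).mono (ℱ.mono hs') le_rfl).sub
      ((hγ s).mono (ℱ.mono hs') le_rfl))).div
      ((hASM s).mono (ℱ.mono hs')).measurable).stronglyMeasurable
  have hYint : ∀ t, Integrable (Y t) μ := by
    intro t
    refine Integrable.add ?_ (integrable_finset_sum _ fun s _ => ?_)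
    · refine Integrable.mono' (hzint t)
        ((((hz t).mono (ℱ.le t) le_rfl).div
          ((hASM' t).mono (ℱ.le t)).measurable).aestronglyMeasurable)
        (ae_of_all _ fun ω => ?_)
      rw [Real.norm_eq_abs, abs_div, abs_of_nonneg (hznn t ω),
        abs_of_pos (hApos t ω)]
      exact div_le_self (hznn t ω) (hA1 t ω)
    · refine Integrable.mono' ((hψint s).add (hγint s))
        (((((hψ s).mono (ℱ.le s) le_rfl).sub
          ((hγ s).mono (ℱ.le s) le_rfl)).div
          ((hASM s).mono (ℱ.le s)).measurable).aestronglyMeasurable)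
        (ae_of_all _ fun ω => ?_)
      rw [Real.norm_eq_abs, abs_div, abs_of_pos (hApos (s + 1) ω)]
      calc |ψ s ω - γ s ω| / A (s + 1) ω ≤ |ψ s ω - γ s ω| :=
            div_le_self (abs_nonneg _) (hA1 _ ω)
        _ ≤ ψ s ω + γ s ω := by
            rw [abs_sub_le_iff]
            constructor <;> [linarith [hγnn s ω]; linarith [hψnn s ω]]
  -- the supermartingale inequality for Y
  have hYsuper : ∀ t, μ[Y (t + 1)|ℱ t] ≤ᵐ[μ] Y t := by
    intro t
    have hAinvSM : StronglyMeasurable[ℱ t] fun ω => (A (t + 1) ω)⁻¹ :=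
      (hASM t).measurable.inv.stronglyMeasurable
    have hAinvb : ∀ ω, 0 ≤ (A (t + 1) ω)⁻¹ ∧ (A (t + 1) ω)⁻¹ ≤ 1 := fun ω =>
      ⟨inv_nonneg.mpr (hApos _ ω).le, inv_le_one_of_one_le₀ (hA1 _ ω)⟩
    have hmulint : Integrable (fun ω => (A (t + 1) ω)⁻¹ * z (t + 1) ω) μ := by
      refine Integrable.mono' (hzint (t + 1))
        ((hAinvSM.mono (ℱ.le t)).aestronglyMeasurable.mul
          ((hz (t + 1)).mono (ℱ.le (t + 1)) le_rfl).aestronglyMeasurable)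
        (ae_of_all _ fun ω => ?_)
      rw [Real.norm_eq_abs, abs_mul, abs_of_nonneg (hAinvb ω).1,
        abs_of_nonneg (hznn _ ω)]
      calc (A (t + 1) ω)⁻¹ * z (t + 1) ω ≤ 1 * z (t + 1) ω :=
            mul_le_mul_of_nonneg_right (hAinvb ω).2 (hznn _ ω)
        _ = z (t + 1) ω := one_mul _
    set C : Ω → ℝ := fun ω => ∑ s ∈ Finset.range (t + 1), (ψ s ω - γ s ω) / A (s + 1) ω
      with hCdef
    have hCSM : StronglyMeasurable[ℱ t] C := by
      refine Finset.stronglyMeasurable_fun_sum _ fun s hs => ?_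
      have hs' : s ≤ t := Nat.lt_succ_iff.mp (Finset.mem_range.mp hs)
      exact ((((hψ s).mono (ℱ.mono hs') le_rfl).sub
        ((hγ s).mono (ℱ.mono hs') le_rfl)).div
        ((hASM s).mono (ℱ.mono hs')).measurable).stronglyMeasurable
    have hCint : Integrable C μ := by
      refine integrable_finset_sum _ fun s _ => ?_
      refine Integrable.mono' ((hψint s).add (hγint s))
        (((((hψ s).mono (ℱ.le s) le_rfl).sub
          ((hγ s).mono (ℱ.le s) le_rfl)).div
          ((hASM s).mono (ℱ.le s)).measurable).aestronglyMeasurable)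
        (ae_of_all _ fun ω => ?_)
      rw [Real.norm_eq_abs, abs_div, abs_of_pos (hApos (s + 1) ω)]
      calc |ψ s ω - γ s ω| / A (s + 1) ω ≤ |ψ s ω - γ s ω| :=
            div_le_self (abs_nonneg _) (hA1 _ ω)
        _ ≤ ψ s ω + γ s ω := by
            rw [abs_sub_le_iff]
            constructor <;> [linarith [hγnn s ω]; linarith [hψnn s ω]]
    have hYsplit : Y (t + 1) = (fun ω => (A (t + 1) ω)⁻¹ * z (t + 1) ω) + C := by
      funext ω
      simp only [hYdef, hCdef, Pi.add_apply]
      rw [div_eq_inv_mul]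
    have h1 : μ[Y (t + 1)|ℱ t] =ᵐ[μ]
        (fun ω => (A (t + 1) ω)⁻¹ * (μ[z (t + 1)|ℱ t]) ω) + C := by
      rw [hYsplit]
      refine (condExp_add hmulint hCint (ℱ t)).trans ?_
      have hmul : μ[(fun ω => (A (t + 1) ω)⁻¹) * z (t + 1)|ℱ t] =ᵐ[μ]
          (fun ω => (A (t + 1) ω)⁻¹) * μ[z (t + 1)|ℱ t] :=
        condExp_mul_of_stronglyMeasurable_left hAinvSM hmulint (hzint (t + 1))
      have hC : μ[C|ℱ t] = C := condExp_of_stronglyMeasurable (ℱ.le t) hCSM hCint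
      rw [hC]
      have hmul2 : μ[fun ω => (A (t + 1) ω)⁻¹ * z (t + 1) ω|ℱ t] =ᵐ[μ]
          fun ω => (A (t + 1) ω)⁻¹ * (μ[z (t + 1)|ℱ t]) ω := hmul
      filter_upwards [hmul2] with ω h1
      simp only [Pi.add_apply] at h1 ⊢
      rw [h1]
    filter_upwards [h1, hrec t] with ω hω hrecω
    rw [hω]
    have hbound : (A (t + 1) ω)⁻¹ * (μ[z (t + 1)|ℱ t]) ω ≤
        (A (t + 1) ω)⁻¹ * ((1 + δ t ω) * z t ω + γ t ω - ψ t ω) :=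
      mul_le_mul_of_nonneg_left hrecω (hAinvb ω).1
    have hAne : A t ω ≠ 0 := (hApos t ω).ne'
    have hδne : (1 : ℝ) + δ t ω ≠ 0 := by linarith [hδnn t ω]
    have halg : (A (t + 1) ω)⁻¹ * ((1 + δ t ω) * z t ω + γ t ω - ψ t ω) + C ω = Y t ω := by
      simp only [hCdef, hYdef, Finset.sum_range_succ]
      rw [hAsucc t ω]
      field_simp
      ring
    calc (A (t + 1) ω)⁻¹ * (μ[z (t + 1)|ℱ t]) ω + C ω
        ≤ (A (t + 1) ω)⁻¹ * ((1 + δ t ω) * z t ω + γ t ω - ψ t ω) + C ω := by linarith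
      _ = Y t ω := halg
  -- indicators and the stopped process W
  set I : ℕ → ℕ → Ω → ℝ := fun a s ω =>
    if ∑ u ∈ Finset.range (s + 1), γ u ω ≤ (a : ℝ) then 1 else 0 with hIdef
  set W : ℕ → ℕ → Ω → ℝ := fun a t ω =>
    Y 0 ω + ∑ s ∈ Finset.range t, I a s ω * (Y (s + 1) ω - Y s ω) with hWdef
  have hISM : ∀ a s, StronglyMeasurable[ℱ s] (I a s) := by
    intro a s
    refine StronglyMeasurable.ite ?_ stronglyMeasurable_const stronglyMeasurable_const
    have hsum : Measurable[ℱ s] fun ω => ∑ u ∈ Finset.range (s + 1), γ u ω := by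
      refine Finset.measurable_sum _ fun u hu => ?_
      exact ((hγ u).mono (ℱ.mono (Nat.lt_succ_iff.mp (Finset.mem_range.mp hu))) le_rfl)
    exact measurableSet_le hsum measurable_const
  have hInn : ∀ a s ω, 0 ≤ I a s ω := by
    intro a s ω; simp only [hIdef]; split <;> norm_num
  have hIb : ∀ a s ω, I a s ω ≤ 1 := by
    intro a s ω; simp only [hIdef]; split <;> norm_num
  have htermint : ∀ a s, Integrable (fun ω => I a s ω * (Y (s + 1) ω - Y s ω)) μ := by
    intro a s
    refine Integrable.mono' ((hYint (s + 1)).norm.add (hYint s).norm)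
      ((((hISM a s).mono (ℱ.le s)).aestronglyMeasurable).mul
        ((((hYadp (s + 1)).mono (ℱ.le (s + 1))).sub
          ((hYadp s).mono (ℱ.le s))).aestronglyMeasurable))
      (ae_of_all _ fun ω => ?_)
    rw [Real.norm_eq_abs, abs_mul, abs_of_nonneg (hInn a s ω)]
    calc I a s ω * |Y (s + 1) ω - Y s ω| ≤ 1 * |Y (s + 1) ω - Y s ω| :=
          mul_le_mul_of_nonneg_right (hIb a s ω) (abs_nonneg _)
      _ = |Y (s + 1) ω - Y s ω| := one_mul _
      _ ≤ ‖Y (s + 1) ω‖ + ‖Y s ω‖ := by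
          rw [Real.norm_eq_abs, Real.norm_eq_abs]; exact abs_sub _ _
  have hWadp : ∀ a, StronglyAdapted ℱ (W a) := by
    intro a t
    refine ((hYadp 0).mono (ℱ.mono (Nat.zero_le t))).add
      (Finset.stronglyMeasurable_fun_sum _ fun s hs => ?_)
    have hs' : s < t := Finset.mem_range.mp hs
    exact ((hISM a s).mono (ℱ.mono hs'.le)).mul
      (((hYadp (s + 1)).mono (ℱ.mono hs')).sub ((hYadp s).mono (ℱ.mono hs'.le)))
  have hWint : ∀ a t, Integrable (W a t) μ := by
    intro a t
    exact (hYint 0).add (integrable_finset_sum _ fun s _ => htermint a s)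
  -- W is a supermartingale
  have hWsuper : ∀ a, Supermartingale (W a) ℱ μ := by
    intro a
    refine supermartingale_nat (hWadp a) (hWint a) fun t => ?_
    have hsplit : W a (t + 1) = (W a t + fun ω => I a t ω * Y (t + 1) ω) -
        fun ω => I a t ω * Y t ω := by
      funext ω
      simp only [hWdef, Pi.add_apply, Pi.sub_apply, Finset.sum_range_succ]
      ring
    have hIY1int : Integrable (fun ω => I a t ω * Y (t + 1) ω) μ := by
      refine Integrable.mono' (hYint (t + 1)).norm
        ((((hISM a t).mono (ℱ.le t)).aestronglyMeasurable).mul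
          (((hYadp (t + 1)).mono (ℱ.le (t + 1))).aestronglyMeasurable))
        (ae_of_all _ fun ω => ?_)
      rw [Real.norm_eq_abs, abs_mul, abs_of_nonneg (hInn a t ω)]
      calc I a t ω * |Y (t + 1) ω| ≤ 1 * |Y (t + 1) ω| :=
            mul_le_mul_of_nonneg_right (hIb a t ω) (abs_nonneg _)
        _ = ‖Y (t + 1) ω‖ := by rw [one_mul]; rfl
    have hIYint : Integrable (fun ω => I a t ω * Y t ω) μ := by
      refine Integrable.mono' (hYint t).norm
        ((((hISM a t).mono (ℱ.le t)).aestronglyMeasurable).mul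
          (((hYadp t).mono (ℱ.le t)).aestronglyMeasurable))
        (ae_of_all _ fun ω => ?_)
      rw [Real.norm_eq_abs, abs_mul, abs_of_nonneg (hInn a t ω)]
      calc I a t ω * |Y t ω| ≤ 1 * |Y t ω| :=
            mul_le_mul_of_nonneg_right (hIb a t ω) (abs_nonneg _)
        _ = ‖Y t ω‖ := by rw [one_mul]; rfl
    rw [hsplit]
    have h1 : μ[(W a t + fun ω => I a t ω * Y (t + 1) ω) - fun ω => I a t ω * Y t ω|ℱ t]
        =ᵐ[μ] μ[W a t|ℱ t] + μ[fun ω => I a t ω * Y (t + 1) ω|ℱ t]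
          - μ[fun ω => I a t ω * Y t ω|ℱ t] := by
      refine (condExp_sub ((hWint a t).add hIY1int) hIYint (ℱ t)).trans ?_
      filter_upwards [condExp_add (hWint a t) hIY1int (ℱ t)] with ω hω
      simp only [Pi.sub_apply, Pi.add_apply] at *
      rw [hω]
    have h2 : μ[W a t|ℱ t] = W a t :=
      condExp_of_stronglyMeasurable (ℱ.le t) (hWadp a t) (hWint a t)
    have h3 : μ[fun ω => I a t ω * Y (t + 1) ω|ℱ t] =ᵐ[μ]
        fun ω => I a t ω * (μ[Y (t + 1)|ℱ t]) ω := by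
      have := condExp_mul_of_stronglyMeasurable_left (hISM a t) (g := Y (t + 1)) hIY1int (hYint (t + 1))
      filter_upwards [this] with ω hω
      exact hω
    have h4 : μ[fun ω => I a t ω * Y t ω|ℱ t] = fun ω => I a t ω * Y t ω :=
      condExp_of_stronglyMeasurable (ℱ.le t) ((hISM a t).mul (hYadp t)) hIYint
    filter_upwards [h1, h3, hYsuper t] with ω e1 e3 e5
    simp only [Pi.add_apply, Pi.sub_apply] at *
    rw [e1, h2, e3, h4]
    have e6 : (fun ω => I a t ω * Y t ω) ω = I a t ω * Y t ω := rfl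
    rw [e6]
    have : I a t ω * (μ[Y (t + 1)|ℱ t]) ω ≤ I a t ω * Y t ω :=
      mul_le_mul_of_nonneg_left e5 (hInn a t ω)
    linarith
  -- telescoping: if the indicators are all one up to t, W = Y
  have hWtel : ∀ (a t : ℕ) (ω : Ω), (∀ s, s < t → ∑ u ∈ Finset.range (s + 1), γ u ω ≤ (a : ℝ)) →
      W a t ω = Y t ω := by
    intro a t ω h
    have : ∀ s ∈ Finset.range t, I a s ω * (Y (s + 1) ω - Y s ω) = Y (s + 1) ω - Y s ω := by
      intro s hs
      have hI1 : I a s ω = 1 := by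
        simp only [hIdef]
        rw [if_pos (h s (Finset.mem_range.mp hs))]
      rw [hI1, one_mul]
    simp only [hWdef]
    rw [Finset.sum_congr rfl this, Finset.sum_range_sub (fun s => Y s ω)]
    ring
  -- W a t equals Y at some stopped index with controlled γ-sum
  have hWstop : ∀ (a t : ℕ) (ω : Ω), ∃ k, k ≤ t ∧ W a t ω = Y k ω ∧
      ∑ u ∈ Finset.range k, γ u ω ≤ (a : ℝ) := by
    intro a t ω
    induction t with
    | zero =>
      refine ⟨0, le_rfl, ?_, by simp⟩
      simp [hWdef]
    | succ t ih =>
      by_cases h : ∑ u ∈ Finset.range (t + 1), γ u ω ≤ (a : ℝ)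
      · refine ⟨t + 1, le_rfl, ?_, h⟩
        refine hWtel a (t + 1) ω fun s hs => ?_
        refine le_trans ?_ h
        refine Finset.sum_le_sum_of_subset_of_nonneg ?_ fun u _ _ => hγnn u ω
        exact Finset.range_subset_range.mpr (Nat.succ_le_succ (Nat.lt_succ_iff.mp hs))
      · obtain ⟨k, hk, hWk, hsk⟩ := ih
        refine ⟨k, hk.trans (Nat.le_succ t), ?_, hsk⟩
        have hgoal : W a (t + 1) ω = W a t ω := by
          have hI0 : I a t ω = 0 := by
            simp only [hIdef]
            rw [if_neg h]
          simp only [hWdef, Finset.sum_range_succ]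
          rw [hI0, zero_mul, add_zero]
        rw [hgoal]
        exact hWk
  -- lower bound on Y at stopped indices, hence on W
  have hWlb : ∀ (a t : ℕ) (ω : Ω), -(a : ℝ) ≤ W a t ω := by
    intro a t ω
    obtain ⟨k, _, hWk, hsk⟩ := hWstop a t ω
    rw [hWk]
    have h1 : -(∑ s ∈ Finset.range k, γ s ω) ≤ Y k ω := by
      simp only [hYdef]
      have h2 : ∀ s ∈ Finset.range k, -(γ s ω) ≤ (ψ s ω - γ s ω) / A (s + 1) ω := by
        intro s _
        have hA := hA1 (s + 1) ω
        have hAp := hApos (s + 1) ω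
        rw [le_div_iff₀ hAp]
        nlinarith [mul_nonneg (hγnn s ω) (sub_nonneg.2 hA), hψnn s ω]
      have h3 : -(∑ s ∈ Finset.range k, γ s ω) ≤
          ∑ s ∈ Finset.range k, (ψ s ω - γ s ω) / A (s + 1) ω := by
        rw [← Finset.sum_neg_distrib]
        exact Finset.sum_le_sum h2
      have h4 : 0 ≤ z k ω / A k ω := div_nonneg (hznn k ω) (hApos k ω).le
      linarith
    linarith
  -- L¹ bound for W
  have hWbdd : ∀ a n, eLpNorm (W a n) 1 μ ≤
      ENNReal.ofReal (∫ ω, z 0 ω ∂μ + 2 * a) := by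
    intro a n
    have hEW : ∫ ω, W a n ω ∂μ ≤ ∫ ω, z 0 ω ∂μ := by
      have h0 : ∫ ω, W a n ω ∂μ ≤ ∫ ω, W a 0 ω ∂μ := by
        have := (hWsuper a).setIntegral_le (Nat.zero_le n) (MeasurableSet.univ (α := Ω))
        simpa [setIntegral_univ] using this
      have hW0 : ∀ ω, W a 0 ω = z 0 ω := by
        intro ω; simp [hWdef, hY0 ω]
      calc ∫ ω, W a n ω ∂μ ≤ ∫ ω, W a 0 ω ∂μ := h0
        _ = ∫ ω, z 0 ω ∂μ := by simp_rw [hW0]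
    have habs : ∀ ω, ‖W a n ω‖ ≤ W a n ω + 2 * a := by
      intro ω
      have := hWlb a n ω
      rw [Real.norm_eq_abs, abs_le]
      have hca : (0 : ℝ) ≤ (a : ℝ) := Nat.cast_nonneg a
      constructor <;> linarith
    rw [eLpNorm_one_eq_lintegral_enorm,
      ← ofReal_integral_norm_eq_lintegral_enorm (hWint a n)]
    refine ENNReal.ofReal_le_ofReal ?_
    calc ∫ ω, ‖W a n ω‖ ∂μ ≤ ∫ ω, (W a n ω + 2 * a) ∂μ :=
          integral_mono (hWint a n).norm ((hWint a n).add (integrable_const _)) habs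
      _ = ∫ ω, W a n ω ∂μ + 2 * a := by
          rw [integral_add (hWint a n) (integrable_const _)]
          simp
      _ ≤ ∫ ω, z 0 ω ∂μ + 2 * a := by linarith
  -- a.e. convergence of each W a
  have hWconv : ∀ a : ℕ, ∀ᵐ ω ∂μ, ∃ c, Tendsto (fun t => W a t ω) atTop (nhds c) := by
    intro a
    have hsub : Submartingale (-(W a)) ℱ μ := (hWsuper a).neg
    have hbdd : ∀ n, eLpNorm ((-(W a)) n) 1 μ ≤
        (∫ ω, z 0 ω ∂μ + 2 * a).toNNReal := by
      intro n
      have : eLpNorm ((-(W a)) n) 1 μ = eLpNorm (W a n) 1 μ := by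
        show eLpNorm (-(W a n)) 1 μ = eLpNorm (W a n) 1 μ
        exact eLpNorm_neg _ _ _
      rw [this]
      refine (hWbdd a n).trans ?_
      rw [ENNReal.ofReal]
    filter_upwards [hsub.exists_ae_tendsto_of_bdd hbdd] with ω ⟨c, hc⟩
    refine ⟨-c, ?_⟩
    have := hc.neg
    simpa using this
  -- the pointwise conclusion
  rw [← ae_all_iff] at hWconv
  filter_upwards [hWconv] with ω hω hsum
  obtain ⟨hδs, hγs⟩ := hsum
  obtain ⟨a, ha⟩ := exists_nat_ge (∑' s, γ s ω)
  have hpartial : ∀ s : ℕ, ∑ u ∈ Finset.range (s + 1), γ u ω ≤ (a : ℝ) := by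
    intro s
    exact le_trans (Summable.sum_le_tsum _ (fun u _ => hγnn u ω) hγs) ha
  have hYconv : ∃ c, Tendsto (fun t => Y t ω) atTop (nhds c) := by
    obtain ⟨c, hc⟩ := hω a
    refine ⟨c, hc.congr fun t => ?_⟩
    exact hWtel a t ω fun s _ => hpartial s
  obtain ⟨c, hc⟩ := hYconv
  -- convergence of A
  have hAbdd : ∀ t, A t ω ≤ Real.exp (∑' s, δ s ω) := by
    intro t
    calc A t ω ≤ ∏ s ∈ Finset.range t, Real.exp (δ s ω) :=
          Finset.prod_le_prod (fun s _ => by linarith [hδnn s ω])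
            (fun s _ => by rw [add_comm]; exact Real.add_one_le_exp (δ s ω))
      _ = Real.exp (∑ s ∈ Finset.range t, δ s ω) := by rw [Real.exp_sum]
      _ ≤ Real.exp (∑' s, δ s ω) :=
          Real.exp_le_exp.mpr (Summable.sum_le_tsum _ (fun s _ => hδnn s ω) hδs)
  have hAconv : ∃ P : ℝ, 1 ≤ P ∧ (∀ t, A t ω ≤ P) ∧
      Tendsto (fun t => A t ω) atTop (nhds P) := by
    have hbdd : BddAbove (Set.range fun t => A t ω) := by
      refine ⟨Real.exp (∑' s, δ s ω), ?_⟩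
      rintro x ⟨t, rfl⟩
      exact hAbdd t
    refine ⟨⨆ t, A t ω, ?_, fun t => le_ciSup hbdd t, tendsto_atTop_ciSup (hAmono ω) hbdd⟩
    calc (1 : ℝ) = A 0 ω := by simp [hAdef]
      _ ≤ ⨆ t, A t ω := le_ciSup hbdd 0
  obtain ⟨P, hP1, hPub, hPconv⟩ := hAconv
  -- summability of γ/A
  have hγA : Summable (fun s => γ s ω / A (s + 1) ω) := by
    refine Summable.of_nonneg_of_le (fun s => div_nonneg (hγnn s ω) (hApos _ ω).le)
      (fun s => div_le_self (hγnn s ω) (hA1 _ ω)) hγs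
  -- summability of ψ/A via bounded partial sums
  have hYbdd : BddAbove (Set.range fun t => Y t ω) := hc.bddAbove_range
  obtain ⟨M, hM⟩ := hYbdd
  have hterm : ∀ s, ψ s ω / A (s + 1) ω =
      (ψ s ω - γ s ω) / A (s + 1) ω + γ s ω / A (s + 1) ω := by
    intro s
    rw [← add_div, sub_add_cancel]
  have hψA : Summable (fun s => ψ s ω / A (s + 1) ω) := by
    refine summable_of_sum_range_le (c := M + ∑' s, γ s ω / A (s + 1) ω)
      (fun s => div_nonneg (hψnn s ω) (hApos _ ω).le) fun t => ?_
    have hYsum : ∑ s ∈ Finset.range t, (ψ s ω - γ s ω) / A (s + 1) ω =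
        Y t ω - z t ω / A t ω := by
      simp only [hYdef]
      ring
    have hsplit : ∑ s ∈ Finset.range t, ψ s ω / A (s + 1) ω =
        (Y t ω - z t ω / A t ω) + ∑ s ∈ Finset.range t, γ s ω / A (s + 1) ω := by
      rw [Finset.sum_congr rfl fun s _ => hterm s, Finset.sum_add_distrib, hYsum]
    rw [hsplit]
    have h1 : Y t ω ≤ M := hM ⟨t, rfl⟩
    have h2 : 0 ≤ z t ω / A t ω := div_nonneg (hznn t ω) (hApos t ω).le
    have h3 : ∑ s ∈ Finset.range t, γ s ω / A (s + 1) ω ≤ ∑' s, γ s ω / A (s + 1) ω :=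
      Summable.sum_le_tsum _ (fun s _ => div_nonneg (hγnn s ω) (hApos _ ω).le) hγA
    have h4 : Y t ω - z t ω / A t ω ≤ M :=
      sub_le_iff_le_add.mpr (h1.trans (le_add_of_nonneg_right h2))
    exact add_le_add h4 h3
  -- summability of ψ
  have hψsum : Summable (fun s => ψ s ω) := by
    refine Summable.of_nonneg_of_le (fun s => hψnn s ω) (fun s => ?_) (hψA.mul_left P)
    have hAne : A (s + 1) ω ≠ 0 := (hApos _ ω).ne'
    calc ψ s ω = ψ s ω / A (s + 1) ω * A (s + 1) ω := by rw [div_mul_cancel₀ _ hAne]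
      _ ≤ ψ s ω / A (s + 1) ω * P :=
          mul_le_mul_of_nonneg_left (hPub (s + 1)) (div_nonneg (hψnn s ω) (hApos _ ω).le)
      _ = P * (ψ s ω / A (s + 1) ω) := mul_comm _ _
  -- convergence of z
  have hdiff : Summable (fun s => (ψ s ω - γ s ω) / A (s + 1) ω) := by
    refine Summable.congr (hψA.sub hγA) fun s => ?_
    rw [← sub_div]
  have hsumconv : Tendsto (fun t => ∑ s ∈ Finset.range t, (ψ s ω - γ s ω) / A (s + 1) ω)
      atTop (nhds (∑' s, (ψ s ω - γ s ω) / A (s + 1) ω)) :=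
    hdiff.hasSum.tendsto_sum_nat
  have hzA : Tendsto (fun t => z t ω / A t ω) atTop
      (nhds (c - ∑' s, (ψ s ω - γ s ω) / A (s + 1) ω)) := by
    have : (fun t => z t ω / A t ω) =
        fun t => Y t ω - ∑ s ∈ Finset.range t, (ψ s ω - γ s ω) / A (s + 1) ω := by
      funext t
      simp only [hYdef]
      ring
    rw [this]
    exact hc.sub hsumconv
  refine ⟨⟨(c - ∑' s, (ψ s ω - γ s ω) / A (s + 1) ω) * P, ?_⟩, hψsum⟩
  have := hzA.mul hPconv
  refine this.congr fun t => ?_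
  rw [div_mul_cancel₀ _ (hApos t ω).ne']
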